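/- arXiv:1405.3237 — 2 statements merged into one kernel-verified Lean document; each statement's English description precedes it below -/
import Mathlib

section
/- Let G be a group and let B₁, B₂ be basal subgroups of G. Then B₁ ∩ B₂ is a basal subgroup of G. -/
variable {G : Type*} [Group G]

/-- The conjugate `B ^ g = g⁻¹ * B * g` of a subgroup `B` by an element `g`. -/
def conjBy (B : Subgroup G) (g : G) : Subgroup G :=
  B.map (MulAut.conj g⁻¹).toMonoidHom

/-- A subgroup is virtually solvable if it has a solvable subgroup of finite index. -/
def VirtSolvable (H : Subgroup G) : Prop :=
  ∃ M : Subgroup G, M ≤ H ∧ M.relIndex H ≠ 0 ∧ IsSolvable ↥M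

/-- A subgroup is virtually nilpotent if it has a nilpotent subgroup of finite index. -/
def VirtNilpotent (H : Subgroup G) : Prop :=
  ∃ M : Subgroup G, M ≤ H ∧ M.relIndex H ≠ 0 ∧ Group.IsNilpotent ↥M

/-- Hypothesis (H1): every virtually solvable subgroup whose normalizer has finite index
(i.e. belonging to `L(G)`) is trivial. -/
def HypH1 (G : Type*) [Group G] : Prop :=
  ∀ H : Subgroup G, (Subgroup.normalizer (H : Set G)).FiniteIndex → VirtSolvable H → H = ⊥

/-- Hypothesis (H2): every nontrivial normal subgroup of `G` contains the derived subgroup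
of some finite-index subgroup of `G`. -/
def HypH2 (G : Type*) [Group G] : Prop :=
  ∀ N : Subgroup G, N.Normal → N ≠ ⊥ →
    ∃ G₀ : Subgroup G, G₀.FiniteIndex ∧ ⁅G₀, G₀⁆ ≤ N

/-- `VA K H` means `K ≤va H`: `K ≤ H` and `K` contains the derived subgroup of some
finite-index subgroup of `H`. -/
def VA (K H : Subgroup G) : Prop :=
  K ≤ H ∧ ∃ A : Subgroup G, A ≤ H ∧ A.relIndex H ≠ 0 ∧ ⁅A, A⁆ ≤ K

/-- A subgroup `B` is basal if its normalizer has finite index and every conjugate of `B`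
either equals `B` or meets `B` trivially. -/
def IsBasal (B : Subgroup G) : Prop :=
  (Subgroup.normalizer (B : Set G)).FiniteIndex ∧ ∀ g : G, conjBy B g = B ∨ conjBy B g ⊓ B = ⊥

/-- The rigid normalizer `R(A)` of a basal subgroup `A`: the intersection of the
normalizers of all basal subgroups meeting `A` trivially. -/
def rigidNormalizer (A : Subgroup G) : Subgroup G :=
  ⨅ B ∈ {B : Subgroup G | IsBasal B ∧ A ⊓ B = ⊥}, Subgroup.normalizer (B : Set G)

lemma conjBy_inf (B₁ B₂ : Subgroup G) (g : G) :
    conjBy (B₁ ⊓ B₂) g = conjBy B₁ g ⊓ conjBy B₂ g :=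
  Subgroup.map_inf B₁ B₂ _ (MulAut.conj g⁻¹).injective

lemma normalizer_inf_le (B₁ B₂ : Subgroup G) :
    Subgroup.normalizer (B₁ : Set G) ⊓ Subgroup.normalizer (B₂ : Set G) ≤
      Subgroup.normalizer ((B₁ ⊓ B₂ : Subgroup G) : Set G) := by
  rintro g ⟨hg1, hg2⟩
  replace hg1 : g ∈ Subgroup.normalizer (B₁ : Set G) := hg1
  replace hg2 : g ∈ Subgroup.normalizer (B₂ : Set G) := hg2
  rw [Subgroup.mem_normalizer_iff] at *
  intro n
  simp only [Subgroup.mem_inf, hg1 n, hg2 n]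

theorem statement9 (B₁ B₂ : Subgroup G) (h₁ : IsBasal B₁) (h₂ : IsBasal B₂) :
    IsBasal (B₁ ⊓ B₂) := by
  obtain ⟨hfi₁, hc₁⟩ := h₁
  obtain ⟨hfi₂, hc₂⟩ := h₂
  constructor
  · have := hfi₁; have := hfi₂
    have : (Subgroup.normalizer (B₁ : Set G) ⊓ Subgroup.normalizer (B₂ : Set G)).FiniteIndex := inferInstance
    exact Subgroup.finiteIndex_of_le (normalizer_inf_le B₁ B₂)
  · intro g
    rw [conjBy_inf]
    rcases hc₁ g with e₁ | d₁
    · rcases hc₂ g with e₂ | d₂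
      · left; rw [e₁, e₂]
      · right
        rw [eq_bot_iff] at d₂ ⊢
        refine le_trans ?_ d₂
        intro x hx
        exact ⟨hx.1.2, hx.2.2⟩
    · right
      rw [eq_bot_iff] at d₁ ⊢
      refine le_trans ?_ d₁
      intro x hx
      exact ⟨hx.1.1, hx.2.1⟩
end

section
/- Let G be a group satisfying (H1), let B be a nontrivial basal subgroup of G, and let g ∈ G be such that C_G(B^g) = C_G(B). Then B^g = B. (Equivalently, the stabilizer of the class [B] under the conjugation action of G on the structure graph is exactly the normalizer N_G(B).) -/
variable {G : Type*} [Group G]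

section Statement11Aux

open Subgroup

lemma conj_mem_iff {B : Subgroup G} {g x : G} : x ∈ conjBy B g ↔ g * x * g⁻¹ ∈ B := by
  constructor
  · rintro ⟨b, hb, rfl⟩
    simpa [MulAut.conj_apply, mul_assoc] using hb
  · intro h
    refine ⟨g * x * g⁻¹, h, ?_⟩
    simp [MulAut.conj_apply, mul_assoc]

lemma normalizer_conjBy (B : Subgroup G) (g : G) :
    (Subgroup.normalizer ((conjBy B g) : Set G)) = conjBy (Subgroup.normalizer (B : Set G)) g :=
  (Subgroup.map_equiv_normalizer_eq B (MulAut.conj g⁻¹)).symm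

lemma finiteIndex_of_le {A C : Subgroup G} (h : A ≤ C) (hA : A.FiniteIndex) :
    C.FiniteIndex := by
  refine ⟨fun h0 => hA.index_ne_zero ?_⟩
  have := Subgroup.index_dvd_of_le h
  rw [h0] at this
  exact zero_dvd_iff.mp this

lemma finiteIndex_conjBy {H : Subgroup G} (g : G) (h : H.FiniteIndex) :
    (conjBy H g).FiniteIndex := by
  refine ⟨fun h0 => h.index_ne_zero ?_⟩
  have heq : (conjBy H g).index = H.index := by
    unfold conjBy
    apply Subgroup.index_map_eq
    · exact (MulAut.conj g⁻¹).surjective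
    · rw [(MulAut.conj g⁻¹).toMonoidHom.ker_eq_bot_iff.mpr (MulAut.conj g⁻¹).injective]
      exact bot_le
  rw [← heq, h0]

lemma conj_mem_centralizer_of_mem_normalizer {H : Subgroup G} {x h : G}
    (hx : x ∈ (Subgroup.normalizer (H : Set G))) (hh : h ∈ centralizer (H : Set G)) :
    x * h * x⁻¹ ∈ centralizer (H : Set G) := by
  rw [mem_centralizer_iff]
  intro k hk
  have hk' : x⁻¹ * k * x ∈ H := by
    have := (Subgroup.mem_normalizer_iff.mp hx (x⁻¹ * k * x)).mpr
    apply this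
    have : x * (x⁻¹ * k * x) * x⁻¹ = k := by group
    rw [this]
    exact hk
  have hcomm : (x⁻¹ * k * x) * h = h * (x⁻¹ * k * x) :=
    mem_centralizer_iff.mp hh _ hk'
  calc k * (x * h * x⁻¹) = x * ((x⁻¹ * k * x) * h) * x⁻¹ := by group
    _ = x * (h * (x⁻¹ * k * x)) * x⁻¹ := by rw [hcomm]
    _ = (x * h * x⁻¹) * k := by group

lemma normalizer_le_normalizer_centralizer (H : Subgroup G) :
    (Subgroup.normalizer (H : Set G)) ≤ normalizer ((centralizer (H : Set G) : Subgroup G) : Set G) := by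
  intro x hx
  rw [Subgroup.mem_normalizer_iff]
  intro h
  constructor
  · exact fun hh => conj_mem_centralizer_of_mem_normalizer hx hh
  · intro hh
    have := conj_mem_centralizer_of_mem_normalizer (inv_mem hx) hh
    have heq : x⁻¹ * (x * h * x⁻¹) * x⁻¹⁻¹ = h := by group
    rwa [heq] at this

lemma mem_normalizer_inf {A C : Subgroup G} {x : G}
    (hA : x ∈ (Subgroup.normalizer (A : Set G))) (hC : x ∈ (Subgroup.normalizer (C : Set G))) : x ∈ (Subgroup.normalizer ((A ⊓ C : Subgroup G) : Set G)) := by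
  rw [Subgroup.mem_normalizer_iff] at *
  intro h
  rw [Subgroup.mem_inf, Subgroup.mem_inf, hA h, hC h]

lemma self_inf_centralizer_eq_bot (hH1 : HypH1 G) (H : Subgroup G)
    (hfi : (Subgroup.normalizer (H : Set G)).FiniteIndex) : H ⊓ centralizer (H : Set G) = ⊥ := by
  apply hH1
  · exact finiteIndex_of_le
      (fun x hx => mem_normalizer_inf hx (normalizer_le_normalizer_centralizer H hx)) hfi
  · refine ⟨H ⊓ centralizer (H : Set G), le_rfl, by rw [Subgroup.relIndex_self]; exact one_ne_zero, ?_⟩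
    apply isSolvable_of_comm
    intro a b
    have ha := Subgroup.mem_inf.mp a.2
    have hb := Subgroup.mem_inf.mp b.2
    exact Subtype.ext (mem_centralizer_iff.mp hb.2 _ ha.1)

lemma eq_bot_of_disjoint_normal (hH1 : HypH1 G) {H K : Subgroup G}
    (hfi : (Subgroup.normalizer (H : Set G)).FiniteIndex) (hK : K.Normal) (hKfi : K.FiniteIndex)
    (hd : H ⊓ K = ⊥) : H = ⊥ := by
  apply hH1 H hfi
  refine ⟨⊥, bot_le, ?_, by
    haveI : Subsingleton (⊥ : Subgroup G) := ⟨fun a b => Subtype.ext ((Subgroup.mem_bot.mp a.2).trans (Subgroup.mem_bot.mp b.2).symm)⟩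
    exact (inferInstance : Group.IsSolvable (⊥ : Subgroup G))⟩
  rw [Subgroup.relIndex_bot_left]
  have h2 : K.relIndex H = Nat.card H := by
    rw [← Subgroup.inf_relIndex_right K H, inf_comm, hd, Subgroup.relIndex_bot_left]
  intro h0
  have h1 : K.relIndex H ∣ K.index := Subgroup.relIndex_dvd_index_of_normal K H
  rw [h2, h0] at h1
  exact hKfi.index_ne_zero (zero_dvd_iff.mp h1)

end Statement11Aux


theorem statement11 (hH1 : HypH1 G) (B : Subgroup G) (hB : IsBasal B) (hBn : B ≠ ⊥)
    (g : G)
    (hc : Subgroup.centralizer ((conjBy B g : Subgroup G) : Set G) =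
      Subgroup.centralizer (B : Set G)) :
    conjBy B g = B := by
  by_contra hne
  have hmeet : conjBy B g ⊓ B = ⊥ := (hB.2 g).resolve_left hne
  set Nc := (Subgroup.normalizer (B : Set G)).normalCore with hNcdef
  have hNcN : Nc.Normal := Subgroup.normalCore_normal _
  have hNcFI : Nc.FiniteIndex := @Subgroup.finiteIndex_normalCore _ _ _ hB.1
  have hNcleNB : Nc ≤ (Subgroup.normalizer (B : Set G)) := Subgroup.normalCore_le _
  have hNcleNBg : Nc ≤ (Subgroup.normalizer ((conjBy B g) : Set G)) := by
    intro x hx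
    have hx' : g * x * g⁻¹ ∈ (Subgroup.normalizer (B : Set G)) := hx g
    rw [Subgroup.mem_normalizer_iff]
    intro h
    rw [conj_mem_iff, conj_mem_iff]
    have key : g * (x * h * x⁻¹) * g⁻¹ =
        (g * x * g⁻¹) * (g * h * g⁻¹) * (g * x * g⁻¹)⁻¹ := by group
    rw [key]
    exact Subgroup.mem_normalizer_iff.mp hx' (g * h * g⁻¹)
  have hNBgFI : (Subgroup.normalizer ((conjBy B g) : Set G)).FiniteIndex := by
    rw [normalizer_conjBy]
    exact finiteIndex_conjBy g hB.1
  set D := B ⊓ Nc with hDdef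
  have hNBleND : (Subgroup.normalizer (B : Set G)) ≤ (Subgroup.normalizer (D : Set G)) := by
    intro x hx
    exact mem_normalizer_inf hx
      (by rw [Subgroup.normalizer_eq_top_iff.mpr hNcN]; exact Subgroup.mem_top x)
  have hDfi : (Subgroup.normalizer (D : Set G)).FiniteIndex := finiteIndex_of_le hNBleND hB.1
  have hDC : D ⊓ Subgroup.centralizer (D : Set G) = ⊥ :=
    self_inf_centralizer_eq_bot hH1 D hDfi
  have hBgCB : conjBy B g ⊓ Subgroup.centralizer (B : Set G) = ⊥ := by
    rw [← hc]
    exact self_inf_centralizer_eq_bot hH1 _ hNBgFI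
  -- elements of `conjBy B g ⊓ Nc` commute with elements of `D`
  have hcommDE : ∀ e ∈ conjBy B g ⊓ Nc, ∀ d ∈ D, d * e = e * d := by
    intro e he d hd
    obtain ⟨heBg, heNc⟩ := Subgroup.mem_inf.mp he
    obtain ⟨hdB, hdNc⟩ := Subgroup.mem_inf.mp hd
    have h1 : e⁻¹ * d * e ∈ B := by
      have := (Subgroup.mem_normalizer_iff.mp (inv_mem (hNcleNB heNc)) d).mp hdB
      rwa [inv_inv] at this
    have hcB : d⁻¹ * e⁻¹ * d * e ∈ B := by
      have heq : d⁻¹ * e⁻¹ * d * e = d⁻¹ * (e⁻¹ * d * e) := by group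
      rw [heq]
      exact mul_mem (inv_mem hdB) h1
    have h2 : d⁻¹ * e⁻¹ * d ∈ conjBy B g := by
      have := (Subgroup.mem_normalizer_iff.mp (inv_mem (hNcleNBg hdNc)) e⁻¹).mp
        (inv_mem heBg)
      rwa [inv_inv] at this
    have hcBg : d⁻¹ * e⁻¹ * d * e ∈ conjBy B g := mul_mem h2 heBg
    have hc1 : d⁻¹ * e⁻¹ * d * e = 1 := by
      have hmem : d⁻¹ * e⁻¹ * d * e ∈ conjBy B g ⊓ B := Subgroup.mem_inf.mpr ⟨hcBg, hcB⟩
      rw [hmeet] at hmem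
      exact Subgroup.mem_bot.mp hmem
    calc d * e = e * (d * (d⁻¹ * e⁻¹ * d * e)) := by group
      _ = e * (d * 1) := by rw [hc1]
      _ = e * d := by rw [mul_one]
  have hECD : conjBy B g ⊓ Nc ≤ Subgroup.centralizer (D : Set G) := by
    intro e he
    exact Subgroup.mem_centralizer_iff.mpr fun d hd => hcommDE e he d hd
  -- `B ⊓ C(D) = ⊥`
  have hBCDbot : B ⊓ Subgroup.centralizer (D : Set G) = ⊥ := by
    apply eq_bot_of_disjoint_normal hH1 ?_ hNcN hNcFI
    · have hle : (B ⊓ Subgroup.centralizer (D : Set G)) ⊓ Nc ≤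
          D ⊓ Subgroup.centralizer (D : Set G) := by
        intro x hx
        obtain ⟨⟨h1, h2⟩, h3⟩ := Subgroup.mem_inf.mp hx |>.imp Subgroup.mem_inf.mp id
        exact Subgroup.mem_inf.mpr ⟨Subgroup.mem_inf.mpr ⟨h1, h3⟩, h2⟩
      rw [← le_bot_iff, ← hDC]
      exact hle
    · exact finiteIndex_of_le
        (fun x hx => mem_normalizer_inf hx
          (normalizer_le_normalizer_centralizer D (hNBleND hx))) hB.1
  -- elements of `conjBy B g ⊓ Nc` commute with all of `B`
  have hcommBE : ∀ e ∈ conjBy B g ⊓ Nc, ∀ b ∈ B, b * e = e * b := by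
    intro e he b hb
    obtain ⟨heBg, heNc⟩ := Subgroup.mem_inf.mp he
    have h1 : e⁻¹ * b * e ∈ B := by
      have := (Subgroup.mem_normalizer_iff.mp (inv_mem (hNcleNB heNc)) b).mp hb
      rwa [inv_inv] at this
    have hcB : b⁻¹ * e⁻¹ * b * e ∈ B := by
      have heq : b⁻¹ * e⁻¹ * b * e = b⁻¹ * (e⁻¹ * b * e) := by group
      rw [heq]
      exact mul_mem (inv_mem hb) h1
    have hbNCD : b ∈ Subgroup.normalizer ((Subgroup.centralizer (D : Set G) : Subgroup G) : Set G) :=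
      normalizer_le_normalizer_centralizer D (hNBleND (Subgroup.le_normalizer hb))
    have h2 : b⁻¹ * e⁻¹ * b ∈ Subgroup.centralizer (D : Set G) := by
      have := (Subgroup.mem_normalizer_iff.mp (inv_mem hbNCD) e⁻¹).mp
        (inv_mem (hECD he))
      rwa [inv_inv] at this
    have hcCD : b⁻¹ * e⁻¹ * b * e ∈ Subgroup.centralizer (D : Set G) :=
      mul_mem h2 (hECD he)
    have hc1 : b⁻¹ * e⁻¹ * b * e = 1 := by
      have hmem : b⁻¹ * e⁻¹ * b * e ∈ B ⊓ Subgroup.centralizer (D : Set G) :=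
        Subgroup.mem_inf.mpr ⟨hcB, hcCD⟩
      rw [hBCDbot] at hmem
      exact Subgroup.mem_bot.mp hmem
    calc b * e = e * (b * (b⁻¹ * e⁻¹ * b * e)) := by group
      _ = e * (b * 1) := by rw [hc1]
      _ = e * b := by rw [mul_one]
  have hEbot : conjBy B g ⊓ Nc = ⊥ := by
    rw [← le_bot_iff, ← hBgCB]
    intro e he
    exact Subgroup.mem_inf.mpr ⟨(Subgroup.mem_inf.mp he).1,
      Subgroup.mem_centralizer_iff.mpr fun b hb => hcommBE e he b hb⟩
  have hBgbot : conjBy B g = ⊥ :=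
    eq_bot_of_disjoint_normal hH1 hNBgFI hNcN hNcFI hEbot
  apply hBn
  rw [Subgroup.eq_bot_iff_forall]
  intro x hx
  have hmem : g⁻¹ * x * g ∈ conjBy B g := by
    rw [conj_mem_iff]
    have heq : g * (g⁻¹ * x * g) * g⁻¹ = x := by group
    rw [heq]
    exact hx
  rw [hBgbot] at hmem
  have := Subgroup.mem_bot.mp hmem
  calc x = g * (g⁻¹ * x * g) * g⁻¹ := by group
    _ = g * 1 * g⁻¹ := by rw [this]
    _ = 1 := by group
end
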